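/- Let Ψ be a complex vector indexed by Fin m × Fin n and let v : Fin m → ℂ be a unit vector. If ptr₂(ΨΨᴴ) = vvᴴ, then there exists a unit vector w : Fin n → ℂ such that Ψ(i,j) = v i · w j for all i, j. That is, if the marginal of a bipartite state vector on the first system is pure, then the bipartite state is a product state. -/

import Mathlib

open Matrix

noncomputable section

/-- Partial trace over the second tensor factor. -/
def ptr2 {m n : ℕ} (X : Matrix (Fin m × Fin n) (Fin m × Fin n) ℂ) :
    Matrix (Fin m) (Fin m) ℂ :=
  Matrix.of fun i j => ∑ k : Fin n, X (i, k) (j, k)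

/-- outer product `v vᴴ` of a complex vector with itself. -/
def outerC {α : Type*} (v : α → ℂ) : Matrix α α ℂ :=
  Matrix.of fun a b => v a * star (v b)

theorem stmt19 {m n : ℕ} (Ψ : Fin m × Fin n → ℂ) (v : Fin m → ℂ)
    (hv : ∑ a, ‖v a‖ ^ 2 = 1)
    (h : ptr2 (outerC Ψ) = outerC v) :
    ∃ w : Fin n → ℂ, (∑ j, ‖w j‖ ^ 2 = 1) ∧ ∀ i j, Ψ (i, j) = v i * w j := by
  set w : Fin n → ℂ := fun j => ∑ i, star (v i) * Ψ (i, j) with hwdef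
  have hE : ∀ i j : Fin m, ∑ k, Ψ (i, k) * star (Ψ (j, k)) = v i * star (v j) := by
    intro i j
    have := congrFun (congrFun h i) j
    simpa [ptr2, outerC] using this
  have hnorm : ∀ z : ℂ, z * star z = ((‖z‖ ^ 2 : ℝ) : ℂ) := by
    intro z
    rw [show ((‖z‖ ^ 2 : ℝ) : ℂ) = (Complex.normSq z : ℂ) by
      rw [Complex.normSq_eq_norm_sq]]
    exact Complex.mul_conj z
  have hvC : ∑ a, v a * star (v a) = 1 := by
    calc ∑ a, v a * star (v a) = ((∑ a, ‖v a‖ ^ 2 : ℝ) : ℂ) := by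
          rw [Complex.ofReal_sum]
          exact Finset.sum_congr rfl fun a _ => hnorm (v a)
      _ = 1 := by rw [hv]; norm_num
  have hws : ∀ j, star (w j) = ∑ i, v i * star (Ψ (i, j)) := by
    intro j
    simp [hwdef, star_sum, mul_comm]
  -- norm of w
  have hwC : ∑ j, w j * star (w j) = 1 := by
    calc ∑ j, w j * star (w j)
        = ∑ j, ∑ a, ∑ b, (star (v a) * v b) * (Ψ (a, j) * star (Ψ (b, j))) := by
          refine Finset.sum_congr rfl fun j _ => ?_
          rw [hws, hwdef, Finset.sum_mul_sum]
          exact Finset.sum_congr rfl fun a _ => Finset.sum_congr rfl fun b _ => by ring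
      _ = ∑ a, ∑ b, (star (v a) * v b) * ∑ j, Ψ (a, j) * star (Ψ (b, j)) := by
          rw [Finset.sum_comm]
          refine Finset.sum_congr rfl fun a _ => ?_
          rw [Finset.sum_comm]
          simp [Finset.mul_sum]
      _ = ∑ a, ∑ b, (v a * star (v a)) * (v b * star (v b)) := by
          refine Finset.sum_congr rfl fun a _ => Finset.sum_congr rfl fun b _ => ?_
          rw [hE]; ring
      _ = (∑ a, v a * star (v a)) * (∑ b, v b * star (v b)) := by
          rw [Finset.sum_mul_sum]
      _ = 1 := by rw [hvC]; ring
  -- cross term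
  have hcross : ∑ i, ∑ j, v i * w j * star (Ψ (i, j)) = 1 := by
    calc ∑ i, ∑ j, v i * w j * star (Ψ (i, j))
        = ∑ j, w j * ∑ i, v i * star (Ψ (i, j)) := by
          rw [Finset.sum_comm]
          refine Finset.sum_congr rfl fun j _ => ?_
          rw [Finset.mul_sum]
          exact Finset.sum_congr rfl fun i _ => by ring
      _ = ∑ j, w j * star (w j) := by
          exact Finset.sum_congr rfl fun j _ => by rw [← hws]
      _ = 1 := hwC
  -- total norm of Ψ
  have hΨ : ∑ i, ∑ j, Ψ (i, j) * star (Ψ (i, j)) = 1 := by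
    calc ∑ i, ∑ j, Ψ (i, j) * star (Ψ (i, j)) = ∑ i, v i * star (v i) := by
          exact Finset.sum_congr rfl fun i _ => hE i i
      _ = 1 := hvC
  -- the key: the difference has zero norm
  have hS : ∑ i, ∑ j, (Ψ (i, j) - v i * w j) * star (Ψ (i, j) - v i * w j) = 0 := by
    have expand : ∀ i j, (Ψ (i, j) - v i * w j) * star (Ψ (i, j) - v i * w j)
        = Ψ (i, j) * star (Ψ (i, j)) - star (v i * w j * star (Ψ (i, j)))
          - v i * w j * star (Ψ (i, j)) + (v i * star (v i)) * (w j * star (w j)) := by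
      intro i j
      simp only [star_sub, StarMul.star_mul, star_star]
      ring
    calc ∑ i, ∑ j, (Ψ (i, j) - v i * w j) * star (Ψ (i, j) - v i * w j)
        = ∑ i, ∑ j, (Ψ (i, j) * star (Ψ (i, j)) - star (v i * w j * star (Ψ (i, j)))
            - v i * w j * star (Ψ (i, j)) + (v i * star (v i)) * (w j * star (w j))) := by
          exact Finset.sum_congr rfl fun i _ => Finset.sum_congr rfl fun j _ => expand i j
      _ = (∑ i, ∑ j, Ψ (i, j) * star (Ψ (i, j)))
          - star (∑ i, ∑ j, v i * w j * star (Ψ (i, j)))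
          - (∑ i, ∑ j, v i * w j * star (Ψ (i, j)))
          + (∑ i, v i * star (v i)) * (∑ j, w j * star (w j)) := by
          simp only [Finset.sum_sub_distrib, Finset.sum_add_distrib, ← star_sum,
            Finset.sum_mul_sum]
      _ = 0 := by rw [hΨ, hcross, hvC, hwC]; simp
  have hzero : ∀ i j, Ψ (i, j) = v i * w j := by
    have hreal : ∑ i, ∑ j, (‖Ψ (i, j) - v i * w j‖ ^ 2 : ℝ) = 0 := by
      have : ((∑ i, ∑ j, (‖Ψ (i, j) - v i * w j‖ ^ 2 : ℝ) : ℝ) : ℂ) = 0 := by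
        rw [Complex.ofReal_sum, ← hS]
        refine Finset.sum_congr rfl fun i _ => ?_
        rw [Complex.ofReal_sum]
        exact Finset.sum_congr rfl fun j _ => (hnorm _).symm
      exact_mod_cast this
    intro i j
    have h1 : ∀ i ∈ Finset.univ, (0:ℝ) ≤ ∑ j, (‖Ψ (i, j) - v i * w j‖ ^ 2 : ℝ) :=
      fun i _ => Finset.sum_nonneg fun j _ => by positivity
    have h2 := (Finset.sum_eq_zero_iff_of_nonneg h1).mp hreal i (Finset.mem_univ i)
    have h3 := (Finset.sum_eq_zero_iff_of_nonneg
      (fun j _ => by positivity : ∀ j ∈ Finset.univ, (0:ℝ) ≤ (‖Ψ (i, j) - v i * w j‖ ^ 2 : ℝ))).mp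
      h2 j (Finset.mem_univ j)
    have h4 := pow_eq_zero_iff (n := 2) (by norm_num) |>.mp h3
    simpa [sub_eq_zero] using h4
  refine ⟨w, ?_, hzero⟩
  have : ((∑ j, (‖w j‖ ^ 2 : ℝ) : ℝ) : ℂ) = 1 := by
    rw [Complex.ofReal_sum, ← hwC]
    exact Finset.sum_congr rfl fun j _ => (hnorm _).symm
  exact_mod_cast this

end
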